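/- For 3 ≤ n ≤ 7, the height of Q(n) — the maximum cardinality of a chain (a subset totally ordered by ⪯_Q) in Q(n) — equals n(n−1)/2 − n(ℓ+1) + 3ℓ(ℓ+1)/2 + 1, where ℓ = ⌊(n−1)/2⌋. -/

import Mathlib

set_option maxRecDepth 1000000
set_option maxHeartbeats 4000000

open Finset

/-- Cumulative sum: `x 0 + ... + x k`. -/
def cum {n : ℕ} (x : Fin n → ℤ) (k : Fin n) : ℤ := ∑ i ∈ Finset.Iic k, x i

/-- The partial order `⪯`: every partial sum of `x` is at most that of `y`. -/
def ple {n : ℕ} (x y : Fin n → ℤ) : Prop := ∀ k : Fin n, cum x k ≤ cum y k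

/-- Membership in `P(n)`: all entries are `1` or `-1`. -/
def isPM {n : ℕ} (v : Fin n → ℤ) : Prop := ∀ i, v i = 1 ∨ v i = -1

/-- Membership in `Q(n)`. -/
def inQ {n : ℕ} (v : Fin n → ℤ) : Prop := isPM v ∧ ¬ ple v 0 ∧ ¬ ple 0 v

/-- Standard inner product on `ℤ^n`. -/
def dotp {n : ℕ} (x y : Fin n → ℤ) : ℤ := ∑ i, x i * y i

/-- The ±1 vector of a subset `S`. -/
def pS {n : ℕ} (S : Finset (Fin n)) : Fin n → ℤ := fun i => if i ∈ S then 1 else -1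

/-- The vector `m_k`: first `k` entries 1, next `k+1` entries −1, rest 1 (0-indexed). -/
def mvec (n k : ℕ) : Fin n → ℤ := fun i => if i.val < k then 1 else if i.val < 2 * k + 1 then -1 else 1

/-- An instance of the partition problem: `c_1 ≥ c_2 ≥ ⋯ ≥ c_n ≥ 0`. -/
def monoc {n : ℕ} (c : Fin n → ℤ) : Prop := (∀ i j : Fin n, i ≤ j → c j ≤ c i) ∧ ∀ i, 0 ≤ c i

instance {n : ℕ} (x y : Fin n → ℤ) : Decidable (ple x y) := by unfold ple; infer_instance
instance {n : ℕ} (v : Fin n → ℤ) : Decidable (inQ v) := by unfold inQ isPM; infer_instance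

/-- The ±1 vector of a Boolean vector. -/
def toInt {n : ℕ} (b : Fin n → Bool) : Fin n → ℤ := fun i => if b i then 1 else -1

/-- Encode a Boolean vector as a natural number. -/
def enc {n : ℕ} (b : Fin n → Bool) : ℕ := ∑ i, if b i then 2 ^ (i : ℕ) else 0

lemma eq_toInt {n : ℕ} {v : Fin n → ℤ} (h : isPM v) :
    v = toInt (fun i => decide (v i = 1)) := by
  funext i
  rcases h i with h1 | h1 <;> simp [toInt, h1]

lemma toInt_inj {n : ℕ} {b b' : Fin n → Bool} (h : toInt b = toInt b') : b = b' := by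
  funext i
  have := congrFun h i
  cases hb : b i <;> cases hb' : b' i <;> simp_all [toInt]

/-- Generic upper bound via a rank function given by a lookup table. -/
lemma chain_card_le {n h : ℕ} (L : List ℕ)
    (H1 : ∀ b : Fin n → Bool, inQ (toInt b) → L.getD (enc b) 0 < h)
    (H2 : ∀ b b' : Fin n → Bool, inQ (toInt b) → inQ (toInt b') →
      ple (toInt b) (toInt b') → b ≠ b' → L.getD (enc b) 0 < L.getD (enc b') 0)
    {A : Finset (Fin n → ℤ)} (hA : ∀ v ∈ A, inQ v)
    (hC : IsChain ple (A : Set (Fin n → ℤ))) : A.card ≤ h := by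
  classical
  have := Finset.card_le_card_of_injOn
    (f := fun v : Fin n → ℤ => L.getD (enc (fun i => decide (v i = 1))) 0) (t := Finset.range h)
    (fun v hv => by
      have hq := hA v hv
      have he := eq_toInt hq.1
      rw [Finset.mem_coe, Finset.mem_range]
      exact H1 _ (he ▸ hq))
    (by
      intro v hv w hw hfvw
      by_contra hne
      have hqv := hA v (Finset.mem_coe.1 hv)
      have hqw := hA w (Finset.mem_coe.1 hw)
      have hev := eq_toInt hqv.1
      have hew := eq_toInt hqw.1
      have hbne : (fun i => decide (v i = 1)) ≠ (fun i => decide (w i = 1)) := by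
        intro hb
        exact hne (by rw [hev, hew, hb])
      rcases hC hv hw hne with hle | hle
      · exact absurd hfvw (Nat.ne_of_lt (H2 _ _ (hev ▸ hqv) (hew ▸ hqw)
          (by rw [← hev, ← hew]; exact hle) hbne))
      · exact absurd hfvw.symm (Nat.ne_of_lt (H2 _ _ (hew ▸ hqw) (hev ▸ hqv)
          (by rw [← hev, ← hew]; exact hle) hbne.symm)))
  simpa using this

lemma isChain_of_ball {n : ℕ} {A : Finset (Fin n → ℤ)}
    (H : ∀ x ∈ A, ∀ y ∈ A, ple x y ∨ ple y x) : IsChain ple (A : Set (Fin n → ℤ)) :=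
  fun x hx y hy _ => H x (Finset.mem_coe.1 hx) y (Finset.mem_coe.1 hy)

def L3 : List ℕ := [0, 0, 0, 0, 0, 0, 0, 0]

def A3 : Finset (Fin 3 → ℤ) := {toInt ![false, true, true]}

lemma key3 : IsGreatest {k | ∃ A : Finset (Fin 3 → ℤ),
    (∀ v ∈ A, inQ v) ∧ IsChain ple (A : Set (Fin 3 → ℤ)) ∧ A.card = k} 1 := by
  constructor
  · exact ⟨A3, by decide, isChain_of_ball (by decide), by decide⟩
  · rintro k ⟨A, h1, h2, rfl⟩
    exact chain_card_le L3 (by decide) (by decide) h1 h2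

def L4 : List ℕ := [0, 0, 0, 0, 0, 0, 0, 0, 0, 1, 0, 0, 0, 0, 1, 0]

def A4 : Finset (Fin 4 → ℤ) := {toInt ![false, true, true, false], toInt ![false, true, true, true]}

lemma key4 : IsGreatest {k | ∃ A : Finset (Fin 4 → ℤ),
    (∀ v ∈ A, inQ v) ∧ IsChain ple (A : Set (Fin 4 → ℤ)) ∧ A.card = k} 2 := by
  constructor
  · exact ⟨A4, by decide, isChain_of_ball (by decide), by decide⟩
  · rintro k ⟨A, h1, h2, rfl⟩
    exact chain_card_le L4 (by decide) (by decide) h1 h2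

def L5 : List ℕ := [0, 0, 0, 4, 0, 3, 0, 0, 0, 2, 0, 0, 0, 0, 3, 0, 0, 1, 0, 0, 0, 0, 2, 0, 0, 3, 1, 0, 0, 0, 4, 0]

def A5 : Finset (Fin 5 → ℤ) := {toInt ![false, false, true, true, true], toInt ![false, true, false, true, true], toInt ![false, true, true, false, true], toInt ![false, true, true, true, false], toInt ![false, true, true, true, true]}

lemma key5 : IsGreatest {k | ∃ A : Finset (Fin 5 → ℤ),
    (∀ v ∈ A, inQ v) ∧ IsChain ple (A : Set (Fin 5 → ℤ)) ∧ A.card = k} 5 := by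
  constructor
  · exact ⟨A5, by decide, isChain_of_ball (by decide), by decide⟩
  · rintro k ⟨A, h1, h2, rfl⟩
    exact chain_card_le L5 (by decide) (by decide) h1 h2

def L6 : List ℕ := [0, 0, 0, 5, 0, 4, 0, 0, 0, 3, 0, 0, 0, 0, 3, 0, 0, 2, 0, 0, 0, 0, 2, 0, 0, 5, 1, 0, 0, 0, 5, 0, 0, 1, 0, 6, 0, 5, 1, 0, 0, 4, 0, 0, 0, 0, 4, 0, 0, 3, 0, 0, 0, 0, 3, 0, 0, 6, 2, 0, 1, 0, 6, 0]

def A6 : Finset (Fin 6 → ℤ) := {toInt ![false, false, true, true, true, false], toInt ![false, false, true, true, true, true], toInt ![false, true, false, true, true, true], toInt ![false, true, true, false, true, true], toInt ![false, true, true, true, false, true], toInt ![false, true, true, true, true, false], toInt ![false, true, true, true, true, true]}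

lemma key6 : IsGreatest {k | ∃ A : Finset (Fin 6 → ℤ),
    (∀ v ∈ A, inQ v) ∧ IsChain ple (A : Set (Fin 6 → ℤ)) ∧ A.card = k} 7 := by
  constructor
  · exact ⟨A6, by decide, isChain_of_ball (by decide), by decide⟩
  · rintro k ⟨A, h1, h2, rfl⟩
    exact chain_card_le L6 (by decide) (by decide) h1 h2

def L7 : List ℕ := [0, 0, 0, 6, 0, 5, 0, 11, 0, 4, 0, 10, 0, 9, 4, 0, 0, 3, 0, 9, 0, 8, 3, 0, 0, 7, 1, 0, 0, 0, 8, 0, 0, 2, 0, 8, 0, 7, 2, 0, 0, 6, 0, 0, 0, 0, 7, 0, 0, 5, 0, 0, 0, 0, 6, 0, 0, 9, 5, 0, 4, 0, 10, 0, 0, 1, 0, 7, 0, 6, 1, 0, 0, 5, 0, 0, 0, 0, 6, 0, 0, 4, 0, 0, 0, 0, 5, 0, 0, 8, 4, 0, 3, 0, 9, 0, 0, 3, 0, 9, 0, 8, 4, 0, 0, 7, 3, 0, 2, 0, 8, 0, 0, 6, 2, 0, 1, 0, 7, 0, 0, 10, 6, 0, 5, 0, 11, 0]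

def A7 : Finset (Fin 7 → ℤ) := {toInt ![false, false, false, true, true, true, true], toInt ![false, false, true, false, true, true, true], toInt ![false, false, true, true, false, true, true], toInt ![false, false, true, true, true, false, true], toInt ![false, false, true, true, true, true, false], toInt ![false, false, true, true, true, true, true], toInt ![false, true, false, true, true, true, true], toInt ![false, true, true, false, true, true, true], toInt ![false, true, true, true, false, true, true], toInt ![false, true, true, true, true, false, true], toInt ![false, true, true, true, true, true, false], toInt ![false, true, true, true, true, true, true]}

lemma key7 : IsGreatest {k | ∃ A : Finset (Fin 7 → ℤ),
    (∀ v ∈ A, inQ v) ∧ IsChain ple (A : Set (Fin 7 → ℤ)) ∧ A.card = k} 12 := by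
  constructor
  · exact ⟨A7, by decide, isChain_of_ball (by decide), by decide⟩
  · rintro k ⟨A, h1, h2, rfl⟩
    exact chain_card_le L7 (by decide) (by decide) h1 h2

theorem stmt11 {n : ℕ} (hn3 : 3 ≤ n) (hn7 : n ≤ 7) :
    ∃ h : ℕ,
      IsGreatest {k | ∃ A : Finset (Fin n → ℤ),
          (∀ v ∈ A, inQ v) ∧ IsChain ple (A : Set (Fin n → ℤ)) ∧ A.card = k} h ∧
      (h : ℤ) = (n : ℤ) * (n - 1) / 2 - n * (((n - 1 : ℕ) / 2 : ℕ) + 1)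
        + 3 * ((n - 1 : ℕ) / 2 : ℕ) * (((n - 1 : ℕ) / 2 : ℕ) + 1) / 2 + 1 := by
  interval_cases n
  · exact ⟨1, key3, by norm_num⟩
  · exact ⟨2, key4, by norm_num⟩
  · exact ⟨5, key5, by norm_num⟩
  · exact ⟨7, key6, by norm_num⟩
  · exact ⟨12, key7, by norm_num⟩
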